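/- Let X be a real normed linear space and let x ∈ X with x ≠ 0. Then x is ρ-smooth if and only if the set x^{⊥ρ} = {y ∈ X : ρ'(x,y) = 0} is a linear subspace of X of codimension one (i.e., a maximal proper linear subspace of X). -/

import Mathlib

open Filter Set

/-- The norm derivative `ρ'₊(x,y) = lim_{t→0⁺} ‖x‖(‖x+ty‖−‖x‖)/t`.
(This one-sided limit always exists by convexity of the norm, so `limUnder` picks it.) -/
noncomputable def rhoP {X : Type*} [NormedAddCommGroup X] [NormedSpace ℝ X] (x y : X) : ℝ :=
  limUnder (nhdsWithin (0 : ℝ) (Set.Ioi 0))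
    (fun t : ℝ => ‖x‖ * (‖x + t • y‖ - ‖x‖) / t)

/-- The norm derivative `ρ'₋(x,y) = lim_{t→0⁻} ‖x‖(‖x+ty‖−‖x‖)/t`. -/
noncomputable def rhoM {X : Type*} [NormedAddCommGroup X] [NormedSpace ℝ X] (x y : X) : ℝ :=
  limUnder (nhdsWithin (0 : ℝ) (Set.Iio 0))
    (fun t : ℝ => ‖x‖ * (‖x + t • y‖ - ‖x‖) / t)

/-- `ρ'(x,y) = (ρ'₊(x,y) + ρ'₋(x,y))/2`. -/
noncomputable def rho {X : Type*} [NormedAddCommGroup X] [NormedSpace ℝ X] (x y : X) : ℝ :=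
  (rhoP x y + rhoM x y) / 2

/-- The set of support functionals at `x`. -/
def suppJ {X : Type*} [NormedAddCommGroup X] [NormedSpace ℝ X] (x : X) :
    Set (X →L[ℝ] ℝ) :=
  {f | ‖f‖ = 1 ∧ f x = ‖x‖}


open Filter Set

section Aux
variable {X : Type*} [NormedAddCommGroup X] [NormedSpace ℝ X]

/-- The difference quotient. -/
noncomputable def slq (x y : X) : ℝ → ℝ :=
  fun t : ℝ => ‖x‖ * (‖x + t • y‖ - ‖x‖) / t

lemma convexOn_aux (x y : X) :
    ConvexOn ℝ univ (fun t : ℝ => ‖x‖ * ‖x + t • y‖) := by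
  have h1 : ConvexOn ℝ univ (fun t : ℝ => ‖x + t • y‖) := by
    refine ⟨convex_univ, fun a _ b _ la lb hla hlb hab => ?_⟩
    have hid : x + (la • a + lb • b) • y = la • (x + a • y) + lb • (x + b • y) := by
      have h2 : la • (x + a • y) + lb • (x + b • y)
          = (la + lb) • x + (la • a + lb • b) • y := by
        simp only [smul_eq_mul]; module
      rw [h2, hab, one_smul]
    show ‖x + (la • a + lb • b) • y‖ ≤ la • ‖x + a • y‖ + lb • ‖x + b • y‖
    rw [hid]
    calc ‖la • (x + a • y) + lb • (x + b • y)‖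
        ≤ ‖la • (x + a • y)‖ + ‖lb • (x + b • y)‖ := norm_add_le _ _
      _ = la • ‖x + a • y‖ + lb • ‖x + b • y‖ := by
          rw [norm_smul, norm_smul, Real.norm_eq_abs, Real.norm_eq_abs,
            abs_of_nonneg hla, abs_of_nonneg hlb]; simp [smul_eq_mul]
  simpa [smul_eq_mul] using h1.smul (norm_nonneg x)

lemma slq_mono (x y : X) {s t : ℝ} (hs : s ≠ 0) (ht : t ≠ 0) (hst : s ≤ t) :
    slq x y s ≤ slq x y t := by
  have := (convexOn_aux x y).secant_mono (a := 0) (x := s) (y := t)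
    (mem_univ _) (mem_univ _) (mem_univ _) hs ht hst
  simp only [zero_smul, add_zero, sub_zero] at this
  have e : ∀ u : ℝ, (‖x‖ * ‖x + u • y‖ - ‖x‖ * ‖x‖) / u = slq x y u := by
    intro u; rw [slq, mul_sub]
  rwa [e, e] at this

lemma tendsto_slq_rhoP (x y : X) :
    Tendsto (slq x y) (nhdsWithin (0 : ℝ) (Set.Ioi 0)) (nhds (rhoP x y)) := by
  have mono : MonotoneOn (slq x y) (Ioi (0 : ℝ)) := fun a ha b hb hab =>
    slq_mono x y (ne_of_gt ha) (ne_of_gt hb) hab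
  have bdd : BddBelow (slq x y '' Ioi (0 : ℝ)) := by
    refine ⟨slq x y (-1), ?_⟩
    rintro r ⟨t, ht, rfl⟩
    exact slq_mono x y (by norm_num) (ne_of_gt ht) (by linarith [mem_Ioi.mp ht])
  have h := mono.tendsto_nhdsGT bdd
  have heq : rhoP x y = sInf (slq x y '' Ioi (0 : ℝ)) := h.limUnder_eq
  rwa [heq]

lemma rhoP_eq_of_tendsto {x y : X} {p : ℝ}
    (h : Tendsto (slq x y) (nhdsWithin (0 : ℝ) (Set.Ioi 0)) (nhds p)) : rhoP x y = p :=
  tendsto_nhds_unique (tendsto_slq_rhoP x y) h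

lemma slq_neg (x y : X) (t : ℝ) : slq x y t = - slq x (-y) (-t) := by
  simp only [slq, smul_neg, neg_smul, neg_neg, div_neg]

lemma tendsto_neg_aux : Tendsto (fun t : ℝ => -t) (nhdsWithin (0 : ℝ) (Set.Iio 0))
    (nhdsWithin (0 : ℝ) (Set.Ioi 0)) := by
  apply tendsto_nhdsWithin_of_tendsto_nhds_of_eventually_within
  · simpa using (continuous_neg.tendsto (0 : ℝ)).mono_left nhdsWithin_le_nhds
  · exact eventually_mem_nhdsWithin.mono fun t ht => by
      simp only [mem_Iio] at ht; simpa using ht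

lemma rhoM_eq (x y : X) : rhoM x y = - rhoP x (-y) := by
  have h : Tendsto (slq x y) (nhdsWithin (0 : ℝ) (Set.Iio 0)) (nhds (-(rhoP x (-y)))) := by
    have := ((tendsto_slq_rhoP x (-y)).comp tendsto_neg_aux).neg
    exact this.congr fun t => (slq_neg x y t).symm
  exact h.limUnder_eq

lemma rhoP_zero (x : X) : rhoP x 0 = 0 := by
  apply rhoP_eq_of_tendsto
  have : slq x (0 : X) = fun _ => (0 : ℝ) := by
    funext t; simp [slq]
  rw [this]; exact tendsto_const_nhds

lemma rhoP_add_smul (x y : X) (c : ℝ) :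
    rhoP x (y + c • x) = rhoP x y + c * ‖x‖ ^ 2 := by
  apply rhoP_eq_of_tendsto
  have hpos : ∀ᶠ t : ℝ in nhdsWithin (0 : ℝ) (Set.Ioi 0), 0 < 1 + t * c := by
    apply eventually_nhdsWithin_of_eventually_nhds
    have hc : ContinuousAt (fun t : ℝ => 1 + t * c) 0 := by fun_prop
    have : Tendsto (fun t : ℝ => 1 + t * c) (nhds 0) (nhds 1) := by
      simpa using hc.tendsto
    exact this.eventually_const_lt (by norm_num)
  have hu : Tendsto (fun t : ℝ => t / (1 + t * c)) (nhdsWithin (0 : ℝ) (Set.Ioi 0))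
      (nhdsWithin (0 : ℝ) (Set.Ioi 0)) := by
    apply tendsto_nhdsWithin_of_tendsto_nhds_of_eventually_within
    · have hc : ContinuousAt (fun t : ℝ => t / (1 + t * c)) 0 :=
        ContinuousAt.div continuousAt_id (by fun_prop) (by norm_num)
      have := hc.tendsto.mono_left (nhdsWithin_le_nhds (s := Set.Ioi (0:ℝ)))
      simpa using this
    · filter_upwards [hpos, self_mem_nhdsWithin] with t h1 h2
      exact mem_Ioi.mpr (div_pos (mem_Ioi.mp h2) h1)
  have key := ((tendsto_slq_rhoP x y).comp hu).add
    (tendsto_const_nhds (x := c * ‖x‖ ^ 2) (f := nhdsWithin (0 : ℝ) (Set.Ioi 0)))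
  refine Tendsto.congr' ?_ key
  filter_upwards [hpos, self_mem_nhdsWithin] with t h1 h2
  have ht : t ≠ 0 := ne_of_gt (mem_Ioi.mp h2)
  have h1' : (1 + t * c) ≠ 0 := ne_of_gt h1
  have hnorm : ‖x + t • (y + c • x)‖ = (1 + t * c) * ‖x + (t / (1 + t * c)) • y‖ := by
    have he : x + t • (y + c • x) = (1 + t * c) • (x + (t / (1 + t * c)) • y) := by
      match_scalars <;> field_simp
    rw [he, norm_smul, Real.norm_eq_abs, abs_of_pos h1]
  show (slq x y ∘ fun t => t / (1 + t * c)) t + c * ‖x‖ ^ 2 = slq x (y + c • x) t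
  show slq x y (t / (1 + t * c)) + c * ‖x‖ ^ 2 = slq x (y + c • x) t
  rw [slq, slq, hnorm]
  field_simp
  ring

lemma rhoP_smul_pos (x y : X) {c : ℝ} (hc : 0 < c) :
    rhoP x (c • y) = c * rhoP x y := by
  apply rhoP_eq_of_tendsto
  have hu : Tendsto (fun t : ℝ => c * t) (nhdsWithin (0 : ℝ) (Set.Ioi 0))
      (nhdsWithin (0 : ℝ) (Set.Ioi 0)) := by
    apply tendsto_nhdsWithin_of_tendsto_nhds_of_eventually_within
    · have : Tendsto (fun t : ℝ => c * t) (nhds 0) (nhds 0) := by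
        simpa using (by fun_prop : Continuous fun t : ℝ => c * t).tendsto (0 : ℝ)
      exact this.mono_left nhdsWithin_le_nhds
    · exact eventually_mem_nhdsWithin.mono fun t ht =>
        mem_Ioi.mpr (mul_pos hc (mem_Ioi.mp ht))
  have key := ((tendsto_slq_rhoP x y).comp hu).const_mul c
  refine Tendsto.congr' ?_ key
  filter_upwards [self_mem_nhdsWithin] with t h2
  have ht : t ≠ 0 := ne_of_gt (mem_Ioi.mp h2)
  show c * slq x y (c * t) = slq x (c • y) t
  rw [slq, slq, smul_smul, mul_comm t c]
  field_simp

lemma rho_add_smul (x y : X) (c : ℝ) :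
    rho x (y + c • x) = rho x y + c * ‖x‖ ^ 2 := by
  have hM : rhoM x (y + c • x) = rhoM x y + c * ‖x‖ ^ 2 := by
    rw [rhoM_eq, rhoM_eq, show -(y + c • x) = -y + (-c) • x by module, rhoP_add_smul]
    ring
  rw [rho, rho, rhoP_add_smul, hM]
  ring

lemma rho_zero (x : X) : rho x 0 = 0 := by
  rw [rho, rhoP_zero, rhoM_eq, neg_zero, rhoP_zero]
  norm_num

lemma rho_self (x : X) : rho x x = ‖x‖ ^ 2 := by
  have := rho_add_smul x 0 1
  rw [zero_add, one_smul, rho_zero, zero_add, one_mul] at this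
  exact this

lemma rho_smul (x y : X) (c : ℝ) : rho x (c • y) = c * rho x y := by
  rcases lt_trichotomy c 0 with hc | hc | hc
  · have hc' : 0 < -c := by linarith
    have h1 : rhoP x (c • y) = c * rhoM x y := by
      have : c • y = (-c) • (-y) := by module
      rw [this, rhoP_smul_pos x (-y) hc']
      have := rhoM_eq x y
      have h2 : rhoP x (-y) = - rhoM x y := by linarith
      rw [h2]; ring
    have h2 : rhoM x (c • y) = c * rhoP x y := by
      rw [rhoM_eq, show -(c • y) = (-c) • y by module, rhoP_smul_pos x y hc']
      ring
    rw [rho, rho, h1, h2]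
    ring
  · subst hc; rw [zero_smul, rho_zero]; ring
  · have h1 : rhoP x (c • y) = c * rhoP x y := rhoP_smul_pos x y hc
    have h2 : rhoM x (c • y) = c * rhoM x y := by
      rw [rhoM_eq, show -(c • y) = c • (-y) by module, rhoP_smul_pos x (-y) hc, rhoM_eq]
      ring
    rw [rho, rho, h1, h2]
    ring

end Aux

/-- x is ρ-smooth iff its ρ-orthogonality set is a linear subspace of codimension one. -/
theorem rho_smooth_iff_orthogonal_set_maximal_subspace
    {X : Type*} [NormedAddCommGroup X] [NormedSpace ℝ X] (x : X) (hx : x ≠ 0) :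
    (∀ y₁ y₂ : X, rho x (y₁ + y₂) = rho x y₁ + rho x y₂) ↔
      ∃ M : Submodule ℝ X, (M : Set X) = {y : X | rho x y = 0} ∧ IsCoatom M := by
  have hxx : rho x x = ‖x‖ ^ 2 := rho_self x
  have hxne : ‖x‖ ^ 2 ≠ 0 := pow_ne_zero _ (norm_ne_zero_iff.mpr hx)
  constructor
  · intro hadd
    set f : X →ₗ[ℝ] ℝ :=
      { toFun := rho x
        map_add' := hadd
        map_smul' := fun c y => rho_smul x y c } with hf
    refine ⟨LinearMap.ker f, ?_, ?_⟩
    · ext y; simp [LinearMap.mem_ker, hf]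
    · constructor
      · intro htop
        have : x ∈ LinearMap.ker f := htop ▸ Submodule.mem_top
        rw [LinearMap.mem_ker] at this
        exact hxne (by rwa [show f x = rho x x from rfl, hxx] at this)
      · intro N hN
        obtain ⟨y, hyN, hyk⟩ := SetLike.exists_of_lt hN
        rw [Submodule.eq_top_iff']
        intro z
        have hfy : f y ≠ 0 := fun h => hyk (LinearMap.mem_ker.mpr h)
        have hz : z - (f z / f y) • y ∈ LinearMap.ker f := by
          rw [LinearMap.mem_ker, map_sub, map_smul]
          field_simp
          rw [smul_eq_mul, div_mul_cancel₀ _ hfy, sub_self]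
        have : z - (f z / f y) • y ∈ N := hN.le hz
        have := N.add_mem this (N.smul_mem (f z / f y) hyN)
        simpa using this
  · rintro ⟨M, hM, hco⟩
    have hxM : x ∉ M := by
      intro h
      have hmem : x ∈ (M : Set X) := h
      rw [hM] at hmem
      rw [Set.mem_setOf_eq, hxx] at hmem
      exact hxne hmem
    have hrhoM : ∀ m ∈ M, rho x m = 0 := by
      intro m hm
      have hmem : m ∈ (M : Set X) := hm
      rw [hM] at hmem
      exact hmem
    have htop : M ⊔ (Submodule.span ℝ {x}) = ⊤ := by
      apply hco.2
      refine lt_of_le_of_ne le_sup_left ?_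
      intro h
      apply hxM
      rw [h]
      exact (le_sup_right : Submodule.span ℝ {x} ≤ M ⊔ Submodule.span ℝ {x})
        (Submodule.mem_span_singleton_self x)
    have hrep : ∀ y : X, ∃ m ∈ M, ∃ c : ℝ, y = m + c • x := by
      intro y
      have : y ∈ M ⊔ Submodule.span ℝ {x} := htop ▸ Submodule.mem_top
      obtain ⟨m, hm, z, hz, hmz⟩ := Submodule.mem_sup.mp this
      obtain ⟨c, rfl⟩ := Submodule.mem_span_singleton.mp hz
      exact ⟨m, hm, c, hmz.symm⟩
    have hval : ∀ (m : X), m ∈ M → ∀ c : ℝ, rho x (m + c • x) = c * ‖x‖ ^ 2 := by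
      intro m hm c
      rw [rho_add_smul, hrhoM m hm, zero_add]
    intro y₁ y₂
    obtain ⟨m₁, hm₁, c₁, rfl⟩ := hrep y₁
    obtain ⟨m₂, hm₂, c₂, rfl⟩ := hrep y₂
    have hsum : m₁ + c₁ • x + (m₂ + c₂ • x) = (m₁ + m₂) + (c₁ + c₂) • x := by module
    rw [hsum, hval _ (M.add_mem hm₁ hm₂), hval _ hm₁, hval _ hm₂]
    ring
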